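/- Let C and D be small categories with finite limits. Suppose L ⊣ M ⊣ R is an adjoint triple in which L : (Dᵒᵖ ⥤ Type) ⥤ (Cᵒᵖ ⥤ Type) preserves finite limits (so M : (Cᵒᵖ ⥤ Type) ⥤ (Dᵒᵖ ⥤ Type) and R : (Dᵒᵖ ⥤ Type) ⥤ (Cᵒᵖ ⥤ Type)). Then there exists a functor G : D ⥤ C preserving finite limits such that M is naturally isomorphic to the restriction functor given by precomposition with Gᵒᵖ, and consequently L is naturally isomorphic to the left Kan extension functor along Gᵒᵖ. (Every ethereal geometric morphism between presheaf topoi on small lex categories is induced by a left exact functor between the sites.) -/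

import Mathlib

universe u

open CategoryTheory Limits

namespace EtherealAux

open Opposite

variable {C : Type u} [SmallCategory C]

/-- A presheaf whose hom functor preserves colimits is representable, provided the base
category has equalizers (so that idempotents split). -/
lemma exists_repr [HasEqualizers C] (Q : Cᵒᵖ ⥤ Type u)
    [PreservesColimitsOfSize.{u, u} (coyoneda.obj (op Q))] :
    ∃ c : C, Nonempty (yoneda.obj c ≅ Q) := by
  have hc := isColimitOfPreserves (coyoneda.obj (op Q))
    (Presheaf.colimitOfRepresentable Q)
  obtain ⟨j, x, hx⟩ := Types.jointly_surjective _ hc (𝟙 Q)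
  set c : C := (CategoryOfElements.π Q).leftOp.obj j with hcdef
  -- `x : Q ⟶ yoneda.obj c`, `ι : yoneda.obj c ⟶ Q`, `x ≫ ι = 𝟙 Q`
  let x₀ : Q ⟶ uliftYoneda.{u}.obj c := x
  let x' : Q ⟶ yoneda.obj c := x₀ ≫ (uliftYonedaIsoYoneda.{u}.hom.app c)
  let ι₀ : uliftYoneda.{u}.obj c ⟶ Q := (Presheaf.coconeOfRepresentable Q).ι.app j
  let ι : yoneda.obj c ⟶ Q := uliftYonedaIsoYoneda.{u}.inv.app c ≫ ι₀
  have hx' : x' ≫ ι = 𝟙 Q := by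
    simp only [x', ι, Category.assoc, Iso.hom_inv_id_app_assoc]
    exact hx
  clear_value x' ι
  -- the idempotent on `c`
  let e : c ⟶ c := yoneda.preimage (ι ≫ x')
  have he : yoneda.map e = ι ≫ x' := yoneda.map_preimage _
  have hee : e ≫ e = e := by
    apply yoneda.map_injective
    rw [yoneda.map_comp, he, Category.assoc, ← Category.assoc x' ι, hx',
      Category.id_comp]
  -- split the idempotent using an equalizer
  let E : C := equalizer e (𝟙 c)
  let i : E ⟶ c := equalizer.ι e (𝟙 c)
  have hi : i ≫ e = i := by
    have := equalizer.condition e (𝟙 c)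
    simpa using this
  let r : c ⟶ E := equalizer.lift e (by rw [hee, Category.comp_id])
  have hr : r ≫ i = e := equalizer.lift_ι _ _
  have hir : i ≫ r = 𝟙 E := by
    rw [← cancel_mono i, Category.assoc, hr, hi, Category.id_comp]
  refine ⟨E, ⟨⟨yoneda.map i ≫ ι, x' ≫ yoneda.map r, ?_, ?_⟩⟩⟩
  · rw [Category.assoc, ← Category.assoc ι x', ← he, ← yoneda.map_comp,
      ← yoneda.map_comp, ← Category.assoc i e, hi, hir, yoneda.map_id]
  · rw [Category.assoc, ← Category.assoc (yoneda.map r), ← yoneda.map_comp, hr,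
      he, Category.assoc, ← Category.assoc x' ι, hx', Category.id_comp]

variable {D : Type u} [SmallCategory D]

/-- Lift a functor into presheaves which lands in representables through yoneda. -/
noncomputable def liftObj (A : D ⥤ (Cᵒᵖ ⥤ Type u))
    (h : ∀ d : D, ∃ c : C, Nonempty (yoneda.obj c ≅ A.obj d)) (d : D) : C :=
  (h d).choose

/-- The isomorphism witnessing the lift. -/
noncomputable def liftIso (A : D ⥤ (Cᵒᵖ ⥤ Type u))
    (h : ∀ d : D, ∃ c : C, Nonempty (yoneda.obj c ≅ A.obj d)) (d : D) :
    yoneda.obj (liftObj A h d) ≅ A.obj d :=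
  (h d).choose_spec.some

/-- The lifted functor. -/
noncomputable def lift (A : D ⥤ (Cᵒᵖ ⥤ Type u))
    (h : ∀ d : D, ∃ c : C, Nonempty (yoneda.obj c ≅ A.obj d)) : D ⥤ C where
  obj d := liftObj A h d
  map {d d'} f :=
    yoneda.preimage ((liftIso A h d).hom ≫ A.map f ≫ (liftIso A h d').inv)
  map_id d := yoneda.map_injective (by simp)
  map_comp {d d' d''} f g := yoneda.map_injective (by simp)

/-- The lifted functor composed with yoneda recovers `A`. -/
noncomputable def liftCompYonedaIso (A : D ⥤ (Cᵒᵖ ⥤ Type u))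
    (h : ∀ d : D, ∃ c : C, Nonempty (yoneda.obj c ≅ A.obj d)) :
    lift A h ⋙ yoneda ≅ A :=
  NatIso.ofComponents (fun d => liftIso A h d) (by
    intro d d' f
    simp [lift])

end EtherealAux

/-- Every ethereal geometric morphism between presheaf topoi on small lex categories is
induced by a left exact functor between the sites: if `L ⊣ M ⊣ R` is an adjoint triple
between presheaf categories with `L` preserving finite limits, then there is a finite
limit preserving functor `G : D ⥤ C` with `M` isomorphic to precomposition with `Gᵒᵖ`
and `L` isomorphic to left Kan extension along `Gᵒᵖ`. -/
theorem statement5 {C D : Type u} [SmallCategory C] [SmallCategory D]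
    [HasFiniteLimits C] [HasFiniteLimits D]
    (L : (Dᵒᵖ ⥤ Type u) ⥤ (Cᵒᵖ ⥤ Type u))
    (M : (Cᵒᵖ ⥤ Type u) ⥤ (Dᵒᵖ ⥤ Type u))
    (R : (Dᵒᵖ ⥤ Type u) ⥤ (Cᵒᵖ ⥤ Type u))
    (adj₁ : L ⊣ M) (adj₂ : M ⊣ R) [PreservesFiniteLimits L] :
    ∃ G : D ⥤ C, Nonempty (PreservesFiniteLimits G) ∧
      Nonempty (M ≅ (Functor.whiskeringLeft Dᵒᵖ Cᵒᵖ (Type u)).obj G.op) ∧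
      Nonempty (L ≅ (Functor.lan G.op : (Dᵒᵖ ⥤ Type u) ⥤ (Cᵒᵖ ⥤ Type u))) := by
  open Opposite in
  -- the composite `yoneda ⋙ L`
  let A : D ⥤ (Cᵒᵖ ⥤ Type u) := yoneda ⋙ L
  have hM : PreservesColimitsOfSize.{u, u} M := adj₂.leftAdjoint_preservesColimits
  -- each `A.obj d` is representable
  have hrep : ∀ d : D, ∃ c : C, Nonempty (yoneda.obj c ≅ A.obj d) := by
    intro d
    letI : PreservesColimitsOfSize.{u, u} (coyoneda.obj (op (A.obj d))) := by
      have hiso : coyoneda.obj (op (A.obj d)) ≅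
          M ⋙ (evaluation Dᵒᵖ (Type u)).obj (op d) :=
        NatIso.ofComponents
          (fun P => Equiv.toIso
            ((adj₁.homEquiv (yoneda.obj d) P).trans yonedaEquiv))
          (by
            intro P P' f
            ext g
            change yonedaEquiv (adj₁.homEquiv _ _ (g ≫ f)) =
              (M.map f).app (op d) (yonedaEquiv (adj₁.homEquiv _ _ g))
            rw [Adjunction.homEquiv_naturality_right, yonedaEquiv_comp])
      exact preservesColimits_of_natIso hiso.symm
    exact EtherealAux.exists_repr (A.obj d)
  -- the lifted functor `G`
  let G : D ⥤ C := EtherealAux.lift A hrep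
  have eGA : G ⋙ yoneda ≅ A := EtherealAux.liftCompYonedaIso A hrep
  -- `G` preserves finite limits
  have hGfin : PreservesFiniteLimits G := by
    haveI : PreservesFiniteLimits (A : D ⥤ (Cᵒᵖ ⥤ Type u)) := by
      haveI : PreservesFiniteLimits (yoneda : D ⥤ (Dᵒᵖ ⥤ Type u)) :=
        ⟨fun J _ _ => inferInstance⟩
      exact comp_preservesFiniteLimits yoneda L
    haveI : PreservesFiniteLimits (G ⋙ yoneda) :=
      preservesFiniteLimits_of_natIso eGA.symm
    exact preservesFiniteLimits_of_reflects_of_preserves G yoneda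
  -- `L` is isomorphic to `lan G.op`
  haveI : PreservesColimitsOfSize.{u, u} L := adj₁.leftAdjoint_preservesColimits
  haveI : PreservesColimitsOfSize.{u, u} (G.op.lan : (Dᵒᵖ ⥤ Type u) ⥤ _) :=
    (G.op.lanAdjunction (Type u)).leftAdjoint_preservesColimits
  have eL : L ≅ uliftYoneda.{u}.leftKanExtension A :=
    Presheaf.uniqueExtensionAlongULiftYoneda L
      (Functor.isoWhiskerRight uliftYonedaIsoYoneda.{u} L).symm
  have elan : (G.op.lan : (Dᵒᵖ ⥤ Type u) ⥤ _) ≅ uliftYoneda.{u}.leftKanExtension A :=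
    Presheaf.uniqueExtensionAlongULiftYoneda _
      (eGA.symm ≪≫ (Functor.isoWhiskerLeft G uliftYonedaIsoYoneda.{u}).symm ≪≫
        Presheaf.compULiftYonedaIsoULiftYonedaCompLan.{u} G)
  have eLlan : L ≅ (G.op.lan : (Dᵒᵖ ⥤ Type u) ⥤ _) := eL ≪≫ elan.symm
  -- `M` is isomorphic to precomposition with `G.op`
  have adj' : L ⊣ (Functor.whiskeringLeft Dᵒᵖ Cᵒᵖ (Type u)).obj G.op :=
    (G.op.lanAdjunction (Type u)).ofNatIsoLeft eLlan.symm
  exact ⟨G, ⟨hGfin⟩, ⟨adj₁.rightAdjointUniq adj'⟩, ⟨eLlan⟩⟩
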